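/- If the finite multiindex β is a permutation of the finite multiindex α, then β∖α = α∖β = ∅ and s_α* s_β = q(α,β)·1; moreover, for every finite multiindex δ one has q((α δ),(β δ)) = q(α,β) and s_{(αδ)}* s_{(βδ)} = q(α,β)·1, where (αδ) denotes the concatenation of α and δ. -/

import Mathlib

open scoped BigOperators InnerProductSpace

namespace QCstar

variable {d : ℕ}

/-- `q(j,α)`: product of `q j a` over the prefix of `α` preceding the first
occurrence of `j` (the whole list if `j` does not occur in `α`). -/
def qOne (q : Fin d → Fin d → ℂ) (j : Fin d) (α : List (Fin d)) : ℂ :=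
  ((α.takeWhile fun a => a ≠ j).map (q j)).prod

/-- `q(α,β)` for finite multiindices, defined by recursion on `α`. -/
def qMul (q : Fin d → Fin d → ℂ) : List (Fin d) → List (Fin d) → ℂ
  | [], _ => 1
  | a :: α, β => qOne q a β * qMul q α (β.erase a)

/-- `s_α = s_{α₁} ⋯ s_{α_m}`. -/
def sWord {A : Type*} [Monoid A] (s : Fin d → A) (α : List (Fin d)) : A :=
  (α.map s).prod

/-- The shift on infinite multiindices. -/
def shift (β : ℕ → Fin d) : ℕ → Fin d := fun n => β (n + 1)

/-- The finite multiindex `(β₁,…,β_m)`. -/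
def prefixList (β : ℕ → Fin d) (m : ℕ) : List (Fin d) :=
  List.ofFn fun i : Fin m => β i

/-- `β ∼ α`: the tails agree up to a shift. -/
def equivTail (β α : ℕ → Fin d) : Prop := ∃ m n, shift^[m] β = shift^[n] α

/-- `q(α,β)` for infinite multiindices: the limit of `q` of the prefixes. -/
noncomputable def qInf (q : Fin d → Fin d → ℂ) (α β : ℕ → Fin d) : ℂ :=
  Filter.limUnder Filter.atTop fun m => qMul q (prefixList α m) (prefixList β m)

/-- `(j, β₁, β₂, …)`. -/
def consSeq (j : Fin d) (β : ℕ → Fin d) : ℕ → Fin d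
  | 0 => j
  | n + 1 => β n

open Classical in
/-- `β ∖ j` for an infinite multiindex: remove the first occurrence of `j`. -/
noncomputable def eraseInf (j : Fin d) (β : ℕ → Fin d) : ℕ → Fin d :=
  if h : ∃ n, β n = j then fun k => if k < Nat.find h then β k else β (k + 1) else β

open Classical in
/-- `q(j,β)` for an infinite multiindex containing `j`. -/
noncomputable def qOneInf (q : Fin d → Fin d → ℂ) (j : Fin d) (β : ℕ → Fin d) : ℂ :=
  if h : ∃ n, β n = j then ∏ k ∈ Finset.range (Nat.find h), q j (β k) else 0

/-- Entries of the Fock form. -/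
noncomputable def fockEntry (q : Fin d → Fin d → ℂ) (α β : List (Fin d)) : ℂ :=
  if β.Perm α then qMul q β α else 0

/-- The Fock sesquilinear form on the free complex vector space with basis the
finite multiindices (conjugate-linear in the first argument). -/
noncomputable def fockForm (q : Fin d → Fin d → ℂ) (x y : List (Fin d) →₀ ℂ) : ℂ :=
  ∑ α ∈ x.support, ∑ β ∈ y.support, (starRingEnd ℂ) (x α) * y β * fockEntry q α β


section Aux

variable {d : ℕ} (q : Fin d → Fin d → ℂ)

lemma qOne_cons_self (j : Fin d) (β : List (Fin d)) : qOne q j (j :: β) = 1 := by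
  simp [qOne]

lemma qOne_cons_ne (j b : Fin d) (hb : b ≠ j) (β : List (Fin d)) :
    qOne q j (b :: β) = q j b * qOne q j β := by
  simp [qOne, List.takeWhile_cons_of_pos, hb]

lemma qOne_append_of_mem (j : Fin d) {β : List (Fin d)} (h : j ∈ β) (δ : List (Fin d)) :
    qOne q j (β ++ δ) = qOne q j β := by
  induction β with
  | nil => simp at h
  | cons b γ ih =>
    by_cases hb : b = j
    · subst hb; simp [qOne]
    · rcases List.mem_cons.1 h with h1 | h2
      · exact absurd h1.symm hb
      · rw [List.cons_append, qOne_cons_ne q j b hb, qOne_cons_ne q j b hb, ih h2]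

lemma list_diff_self (l : List (Fin d)) : l.diff l = [] := by
  induction l with
  | nil => rfl
  | cons a l ih => rw [List.diff_cons, List.erase_cons_head]; exact ih

lemma qMul_self (l : List (Fin d)) : qMul q l l = 1 := by
  induction l with
  | nil => rfl
  | cons a l ih => rw [qMul, qOne_cons_self, List.erase_cons_head, ih, one_mul]

lemma qMul_append {α β : List (Fin d)} (hperm : β.Perm α) (δ : List (Fin d)) :
    qMul q (α ++ δ) (β ++ δ) = qMul q α β := by
  induction α generalizing β with
  | nil =>
    have : β = [] := hperm.eq_nil
    subst this; simpa [qMul] using qMul_self q δ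
  | cons a α' ih =>
    have ha : a ∈ β := hperm.symm.subset List.mem_cons_self
    have hperm' : (β.erase a).Perm α' := by
      have := hperm.erase a
      rwa [List.erase_cons_head] at this
    rw [List.cons_append, qMul, qOne_append_of_mem q a ha δ,
      List.erase_append_left δ ha, ih hperm', qMul]

lemma sWord_cons {A : Type*} [Monoid A] (s : Fin d → A) (a : Fin d) (l : List (Fin d)) :
    sWord s (a :: l) = s a * sWord s l := by
  simp [sWord]

variable {A : Type*} [NormedRing A] [StarRing A] [NormedAlgebra ℂ A]
  (s : Fin d → A) (hiso : ∀ i, star (s i) * s i = 1)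
  (hrel : ∀ i j : Fin d, i ≠ j → star (s i) * s j = q i j • (s j * star (s i)))

include hiso hrel in
lemma star_mul_sWord (a : Fin d) {β : List (Fin d)} (h : a ∈ β) :
    star (s a) * sWord s β = qOne q a β • sWord s (β.erase a) := by
  induction β with
  | nil => simp at h
  | cons b γ ih =>
    by_cases hb : b = a
    · subst hb
      rw [sWord_cons, ← mul_assoc, hiso, one_mul, qOne_cons_self, one_smul,
        List.erase_cons_head]
    · have h2 : a ∈ γ := by
        rcases List.mem_cons.1 h with h1 | h2
        · exact absurd h1.symm hb
        · exact h2
      have hab : a ≠ b := fun hh => hb hh.symm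
      rw [sWord_cons, ← mul_assoc, hrel a b hab, smul_mul_assoc, mul_assoc, ih h2,
        mul_smul_comm, List.erase_cons_tail (by simp [hb]), sWord_cons,
        qOne_cons_ne q a b hb, mul_smul, smul_smul, mul_comm (q a b)]

include hiso hrel in
lemma star_sWord_mul_sWord {α β : List (Fin d)} (hperm : β.Perm α) :
    star (sWord s α) * sWord s β = qMul q α β • (1 : A) := by
  induction α generalizing β with
  | nil =>
    have : β = [] := hperm.eq_nil
    subst this; simp [sWord, qMul]
  | cons a α' ih =>
    have ha : a ∈ β := hperm.symm.subset List.mem_cons_self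
    have hperm' : (β.erase a).Perm α' := by
      have := hperm.erase a
      rwa [List.erase_cons_head] at this
    rw [sWord_cons, star_mul, mul_assoc, star_mul_sWord q s hiso hrel a ha,
      mul_smul_comm, ih hperm', smul_smul, qMul, mul_comm (qOne q a β)]

end Aux

theorem statement3 {d : ℕ} (hd : 2 ≤ d) (q : Fin d → Fin d → ℂ)
    (hsym : ∀ i j : Fin d, i ≠ j → q i j = (starRingEnd ℂ) (q j i))
    (hlt : ∀ i j : Fin d, i ≠ j → ‖q i j‖ < 1)
    {A : Type*} [NormedRing A] [StarRing A] [CStarRing A] [CompleteSpace A]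
    [NormedAlgebra ℂ A] [StarModule ℂ A]
    (s : Fin d → A) (hiso : ∀ i, star (s i) * s i = 1)
    (hrel : ∀ i j : Fin d, i ≠ j → star (s i) * s j = q i j • (s j * star (s i)))
    (α β : List (Fin d)) (hperm : β.Perm α) :
    β.diff α = [] ∧ α.diff β = [] ∧
    star (sWord s α) * sWord s β = qMul q α β • (1 : A) ∧
    ∀ δ : List (Fin d),
      qMul q (α ++ δ) (β ++ δ) = qMul q α β ∧
      star (sWord s (α ++ δ)) * sWord s (β ++ δ) = qMul q α β • (1 : A) := by
  have hdiff1 : β.diff α = [] := by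
    rw [List.Perm.diff_left β hperm.symm]; exact list_diff_self β
  have hdiff2 : α.diff β = [] := by
    rw [List.Perm.diff_left α hperm]; exact list_diff_self α
  refine ⟨hdiff1, hdiff2, star_sWord_mul_sWord q s hiso hrel hperm, fun δ => ?_⟩
  refine ⟨qMul_append q hperm δ, ?_⟩
  rw [star_sWord_mul_sWord q s hiso hrel (hperm.append_right δ), qMul_append q hperm δ]


end QCstar
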